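/- For every integer w ≥ 2, there exists M = M(w) and Δ* such that for all n ≥ M there exists a connected graph G on n vertices with maximum degree at most Δ* satisfying the w-strong neighbourhood property (for all distinct u, v: #(N[v] \ N[u]) ≥ w). In particular, for each fixed w, graphs with the w-strong neighbourhood property and uniformly bounded degree exist on all sufficiently many vertices. -/

import Mathlib

open Finset SimpleGraph

private lemma pow3_inj {a b : ℕ} (h : (3:ℕ)^a = 3^b) : a = b :=
  Nat.pow_right_injective (by norm_num) h

private lemma pow3_add_inj_le : ∀ a b c d : ℕ, a ≤ b → c ≤ d →
    3^a + 3^b = 3^c + 3^d → a = c ∧ b = d := by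
  intro a
  induction a with
  | zero =>
    intro b c d hab hcd h
    rcases Nat.eq_zero_or_pos c with hc | hc
    · subst hc
      simp only [pow_zero] at h
      exact ⟨rfl, pow3_inj (by omega)⟩
    · exfalso
      have h3c : (3:ℕ) ∣ 3^c := dvd_pow_self 3 hc.ne'
      have h3d : (3:ℕ) ∣ 3^d := dvd_pow_self 3 (by omega : d ≠ 0)
      rcases Nat.eq_zero_or_pos b with hb | hb
      · subst hb; simp only [pow_zero] at h; omega
      · have h3b : (3:ℕ) ∣ 3^b := dvd_pow_self 3 hb.ne'
        simp only [pow_zero] at h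
        omega
  | succ a ih =>
    intro b c d hab hcd h
    have hb : 1 ≤ b := le_trans (Nat.succ_le_succ (Nat.zero_le a)) hab
    have hc : 1 ≤ c := by
      by_contra hc
      have hc0 : c = 0 := by omega
      subst hc0
      have h3a : (3:ℕ) ∣ 3^(a+1) := dvd_pow_self 3 (Nat.succ_ne_zero a)
      have h3b : (3:ℕ) ∣ 3^b := dvd_pow_self 3 (by omega : b ≠ 0)
      rcases Nat.eq_zero_or_pos d with hd | hd
      · subst hd; simp only [pow_zero] at h; omega
      · have h3d : (3:ℕ) ∣ 3^d := dvd_pow_self 3 hd.ne'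
        simp only [pow_zero] at h
        omega
    have hd : 1 ≤ d := le_trans hc hcd
    have e1 : (3:ℕ)^(a+1) = 3 * 3^a := by ring
    have e2 : (3:ℕ)^b = 3 * 3^(b-1) := by
      conv_lhs => rw [show b = (b-1)+1 by omega]
      ring
    have e3 : (3:ℕ)^c = 3 * 3^(c-1) := by
      conv_lhs => rw [show c = (c-1)+1 by omega]
      ring
    have e4 : (3:ℕ)^d = 3 * 3^(d-1) := by
      conv_lhs => rw [show d = (d-1)+1 by omega]
      ring
    rw [e1, e2, e3, e4] at h
    have key : 3^a + 3^(b-1) = 3^(c-1) + 3^(d-1) := by omega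
    have := ih (b-1) (c-1) (d-1) (by omega) (by omega) key
    omega

private lemma pow3_add_inj (a b c d : ℕ) (h : 3^a + 3^b = 3^c + 3^d) :
    (a = c ∧ b = d) ∨ (a = d ∧ b = c) := by
  rcases le_total a b with hab | hab <;> rcases le_total c d with hcd | hcd
  · exact Or.inl (pow3_add_inj_le a b c d hab hcd h)
  · have := pow3_add_inj_le a b d c hab hcd (by omega)
    exact Or.inr this
  · have := pow3_add_inj_le b a c d hab hcd (by omega)
    exact Or.inr ⟨this.2, this.1⟩
  · have := pow3_add_inj_le b a d c hab hcd (by omega)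
    exact Or.inl ⟨this.2, this.1⟩

private lemma cancel_mod {n : ℕ} (c x y : ℕ) (hx : x < n) (hy : y < n)
    (h : (c + x) % n = (c + y) % n) : x = y := by
  have h' : x ≡ y [MOD n] := Nat.ModEq.add_left_cancel' c h
  rwa [Nat.ModEq, Nat.mod_eq_of_lt hx, Nat.mod_eq_of_lt hy] at h'

/-- For every `w ≥ 2` there are `M` and `Δ*` such that for every `n ≥ M` there exists a
connected graph on `n` vertices with maximum degree at most `Δ*` satisfying the
`w`-strong neighbourhood property. -/
theorem stmt_18 (w : ℕ) (hw : 2 ≤ w) :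
    ∃ M Δstar : ℕ, ∀ n : ℕ, M ≤ n →
      ∃ G : SimpleGraph (Fin n),
        G.Connected ∧
        @SimpleGraph.maxDegree _ G _ (Classical.decRel _) ≤ Δstar ∧
        ∀ u v : Fin n, u ≠ v →
          w ≤ (((insert v (@SimpleGraph.neighborFinset _ G v
                    (@SimpleGraph.neighborSetFintype _ G _ (Classical.decRel _) v)))
                \ (insert u (@SimpleGraph.neighborFinset _ G u
                    (@SimpleGraph.neighborSetFintype _ G _ (Classical.decRel _) u)))).card) := by
  classical
  set k := w + 4 with hk
  refine ⟨3 ^ k, 2 * k, ?_⟩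
  intro n hn
  have hn1 : 0 < n := lt_of_lt_of_le (show 0 < 3^k from Nat.pow_pos (by norm_num)) hn
  have hpow_lt : ∀ i, i < k → 3^i < n := by
    intro i hi
    exact lt_of_lt_of_le (Nat.pow_lt_pow_right (by norm_num) hi) hn
  have hpow_pos : ∀ i : ℕ, 0 < 3^i := fun i => Nat.pow_pos (by norm_num)
  have hsum_lt : ∀ i j, i < k → j < k → 3^i + 3^j < n := by
    intro i j hi hj
    have h1 : (3:ℕ)^i ≤ 3^(k-1) := Nat.pow_le_pow_right (by norm_num) (by omega)
    have h2 : (3:ℕ)^j ≤ 3^(k-1) := Nat.pow_le_pow_right (by norm_num) (by omega)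
    have h3 : (3:ℕ)^k = 3 * 3^(k-1) := by
      conv_lhs => rw [show k = (k-1)+1 by omega]
      ring
    have h4 : 0 < (3:ℕ)^(k-1) := hpow_pos _
    omega
  set G : SimpleGraph (Fin n) :=
    SimpleGraph.fromRel (fun u v => ∃ i, i < k ∧ (u.val + 3^i) % n = v.val) with hG
  have hAdj : ∀ u v : Fin n, G.Adj u v ↔ u ≠ v ∧
      ((∃ i, i < k ∧ (u.val + 3^i) % n = v.val) ∨ (∃ i, i < k ∧ (v.val + 3^i) % n = u.val)) := by
    intro u v
    rw [hG, SimpleGraph.fromRel_adj]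
  refine ⟨G, ?_, ?_, ?_⟩
  · -- connected
    rw [SimpleGraph.connected_iff]
    constructor
    · have key : ∀ m : ℕ, ∀ v : Fin n, v.val = m → G.Reachable v ⟨0, hn1⟩ := by
        intro m
        induction m with
        | zero =>
          intro v hv
          have : v = ⟨0, hn1⟩ := Fin.ext hv
          rw [this]
        | succ m ih =>
          intro v hv
          have hm : m < n := by have := v.isLt; omega
          have hadj : G.Adj v ⟨m, hm⟩ := by
            rw [hAdj]
            refine ⟨?_, Or.inr ⟨0, by omega, ?_⟩⟩
            · intro h
              have := congrArg Fin.val h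
              simp only at this
              omega
            · simp only [pow_zero]
              rw [Nat.mod_eq_of_lt (by omega : m + 1 < n)]
              omega
          exact (hadj.symm.reachable.symm).trans (ih ⟨m, hm⟩ rfl)
      intro u v
      exact (key u.val u rfl).trans (key v.val v rfl).symm
    · exact ⟨⟨0, hn1⟩⟩
  · -- max degree
    convert SimpleGraph.maxDegree_le_of_forall_degree_le (G := G) (2 * k) ?_
    intro u
    have hsub : ∀ (inst : Fintype (G.neighborSet u)), @SimpleGraph.neighborFinset _ G u inst ⊆
        (Finset.range k).image (fun i => (⟨(u.val + 3^i) % n, Nat.mod_lt _ hn1⟩ : Fin n)) ∪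
        (Finset.range k).image (fun i => (⟨(u.val + (n - 3^i)) % n, Nat.mod_lt _ hn1⟩ : Fin n)) := by
      intro inst x hx
      rw [SimpleGraph.mem_neighborFinset, hAdj] at hx
      obtain ⟨hne, h | h⟩ := hx
      · obtain ⟨i, hi, h⟩ := h
        exact Finset.mem_union_left _
          (Finset.mem_image.2 ⟨i, Finset.mem_range.2 hi, Fin.ext h⟩)
      · obtain ⟨i, hi, h⟩ := h
        refine Finset.mem_union_right _ (Finset.mem_image.2 ⟨i, Finset.mem_range.2 hi, ?_⟩)
        apply Fin.ext
        have h3 : 3^i ≤ n := (hpow_lt i hi).le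
        have hmod : (x.val + 3^i) % n = u.val % n := by
          rw [h, Nat.mod_eq_of_lt u.isLt]
        have step : (x.val + 3^i + (n - 3^i)) % n = (u.val + (n - 3^i)) % n :=
          Nat.ModEq.add_right _ hmod
        have e : x.val + 3^i + (n - 3^i) = x.val + n := by omega
        rw [e, Nat.add_mod_right, Nat.mod_eq_of_lt x.isLt] at step
        exact step.symm
    show (G.neighborFinset u).card ≤ 2 * k
    calc (G.neighborFinset u).card ≤ _ := Finset.card_le_card (hsub _)
      _ ≤ ((Finset.range k).image (fun i => (⟨(u.val + 3^i) % n, Nat.mod_lt _ hn1⟩ : Fin n))).card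
          + ((Finset.range k).image
              (fun i => (⟨(u.val + (n - 3^i)) % n, Nat.mod_lt _ hn1⟩ : Fin n))).card :=
        Finset.card_union_le _ _
      _ ≤ 2 * k := by
        have h1 := Finset.card_image_le (s := Finset.range k)
          (f := fun i => (⟨(u.val + 3^i) % n, Nat.mod_lt _ hn1⟩ : Fin n))
        have h2 := Finset.card_image_le (s := Finset.range k)
          (f := fun i => (⟨(u.val + (n - 3^i)) % n, Nat.mod_lt _ hn1⟩ : Fin n))
        rw [Finset.card_range] at h1 h2
        omega
  · -- strong neighbourhood property
    intro u v huv
    have key : ∀ (instu : Fintype (G.neighborSet u)) (instv : Fintype (G.neighborSet v)),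
        w ≤ ((insert v (@SimpleGraph.neighborFinset _ G v instv))
              \ (insert u (@SimpleGraph.neighborFinset _ G u instu))).card := by
      intro instu instv
      set f : ℕ → Fin n := fun i => ⟨(v.val + 3^i) % n, Nat.mod_lt _ hn1⟩ with hf
      have hfval : ∀ i, (f i).val = (v.val + 3^i) % n := fun i => rfl
      have hfinj : ∀ i ∈ Finset.range k, ∀ j ∈ Finset.range k, f i = f j → i = j := by
        intro i hi j hj h
        have := congrArg Fin.val h
        rw [hfval, hfval] at this
        exact pow3_inj (cancel_mod v.val _ _ (hpow_lt i (Finset.mem_range.1 hi))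
          (hpow_lt j (Finset.mem_range.1 hj)) this)
      set Bad : Finset ℕ :=
        (Finset.range k).filter (fun i => f i = u ∨ G.Adj u (f i)) with hBad
      set B1 : Finset ℕ :=
        (Finset.range k).filter (fun i => (v.val + 3^i) % n = u.val) with hB1
      set B2 : Finset ℕ :=
        (Finset.range k).filter
          (fun i => ∃ j, j < k ∧ (u.val + 3^j) % n = (v.val + 3^i) % n) with hB2
      set B3 : Finset ℕ :=
        (Finset.range k).filter (fun i => ∃ j, j < k ∧ (v.val + 3^i + 3^j) % n = u.val) with hB3
      have hBadsub : Bad ⊆ B1 ∪ B2 ∪ B3 := by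
        intro i hi
        rw [hBad, Finset.mem_filter] at hi
        obtain ⟨hik, hcase⟩ := hi
        rcases hcase with h | h
        · refine Finset.mem_union_left _ (Finset.mem_union_left _ ?_)
          rw [hB1, Finset.mem_filter]
          exact ⟨hik, by rw [← congrArg Fin.val h]⟩
        · rw [hAdj] at h
          obtain ⟨-, h | h⟩ := h
          · obtain ⟨j, hj, hje⟩ := h
            refine Finset.mem_union_left _ (Finset.mem_union_right _ ?_)
            rw [hB2, Finset.mem_filter]
            exact ⟨hik, j, hj, by rw [hje, hfval]⟩
          · obtain ⟨j, hj, hje⟩ := h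
            refine Finset.mem_union_right _ ?_
            rw [hB3, Finset.mem_filter]
            refine ⟨hik, j, hj, ?_⟩
            rw [hfval] at hje
            rwa [Nat.mod_add_mod] at hje
      have huvval : u.val ≠ v.val := fun h => huv (Fin.ext h)
      have hB1card : B1.card ≤ 1 := by
        rw [Finset.card_le_one]
        intro a ha b hb
        rw [hB1, Finset.mem_filter] at ha hb
        obtain ⟨hak, ha⟩ := ha
        obtain ⟨hbk, hb⟩ := hb
        exact pow3_inj (cancel_mod v.val _ _ (hpow_lt a (Finset.mem_range.1 hak))
          (hpow_lt b (Finset.mem_range.1 hbk)) (ha.trans hb.symm))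
      have hB2card : B2.card ≤ 1 := by
        rw [Finset.card_le_one]
        intro a ha b hb
        rw [hB2, Finset.mem_filter] at ha hb
        obtain ⟨hak, ja, hja, hea⟩ := ha
        obtain ⟨hbk, jb, hjb, heb⟩ := hb
        have hadd : ((u.val + 3^ja) + (v.val + 3^b)) % n
            = ((v.val + 3^a) + (u.val + 3^jb)) % n :=
          Nat.ModEq.add hea heb.symm
        have e1 : (u.val + 3^ja) + (v.val + 3^b) = (u.val + v.val) + (3^ja + 3^b) := by ring
        have e2 : (v.val + 3^a) + (u.val + 3^jb) = (u.val + v.val) + (3^a + 3^jb) := by ring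
        rw [e1, e2] at hadd
        have hsum : 3^ja + 3^b = 3^a + 3^jb :=
          cancel_mod _ _ _ (hsum_lt _ _ hja (Finset.mem_range.1 hbk))
            (hsum_lt _ _ (Finset.mem_range.1 hak) hjb) hadd
        rcases pow3_add_inj _ _ _ _ hsum with ⟨h1, h2⟩ | ⟨h1, h2⟩
        · exfalso
          rw [h1] at hea
          have h' : (3^a + u.val) % n = (3^a + v.val) % n := by
            rw [Nat.add_comm ((3:ℕ)^a) u.val, Nat.add_comm ((3:ℕ)^a) v.val]
            exact hea
          exact huvval (cancel_mod _ u.val v.val u.isLt v.isLt h')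
        · exact h2.symm
      have hB3card : B3.card ≤ 2 := by
        rcases Finset.eq_empty_or_nonempty B3 with he | ⟨i0, hi0⟩
        · rw [he]; simp
        · rw [hB3, Finset.mem_filter] at hi0
          obtain ⟨hi0k, j0, hj0, he0⟩ := hi0
          have hsub3 : B3 ⊆ {i0, j0} := by
            intro i hi
            rw [hB3, Finset.mem_filter] at hi
            obtain ⟨hik, j, hj, hej⟩ := hi
            have hadd : (v.val + (3^i + 3^j)) % n = (v.val + (3^i0 + 3^j0)) % n := by
              rw [← Nat.add_assoc, ← Nat.add_assoc, hej, he0]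
            have hsum : 3^i + 3^j = 3^i0 + 3^j0 :=
              cancel_mod _ _ _ (hsum_lt _ _ (Finset.mem_range.1 hik) hj)
                (hsum_lt _ _ (Finset.mem_range.1 hi0k) hj0) hadd
            rcases pow3_add_inj _ _ _ _ hsum with ⟨h1, -⟩ | ⟨h1, -⟩
            · rw [h1]; exact Finset.mem_insert_self _ _
            · rw [h1]; exact Finset.mem_insert_of_mem (Finset.mem_singleton_self _)
          calc B3.card ≤ ({i0, j0} : Finset ℕ).card := Finset.card_le_card hsub3
            _ ≤ 2 := by
              have := Finset.card_insert_le i0 ({j0} : Finset ℕ)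
              simpa using this
      have hBadcard : Bad.card ≤ 4 := by
        have h12 := Finset.card_union_le B1 B2
        have h123 := Finset.card_union_le (B1 ∪ B2) B3
        have := Finset.card_le_card hBadsub
        omega
      set Good : Finset ℕ := Finset.range k \ Bad with hGood
      have hGoodcard : w ≤ Good.card := by
        rw [hGood, Finset.card_sdiff_of_subset (show Bad ⊆ Finset.range k by
          rw [hBad]; exact Finset.filter_subset _ _), Finset.card_range]
        omega
      have himg : Good.image f ⊆ (insert v (@SimpleGraph.neighborFinset _ G v instv))
          \ (insert u (@SimpleGraph.neighborFinset _ G u instu)) := by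
        intro x hx
        obtain ⟨i, hi, rfl⟩ := Finset.mem_image.1 hx
        rw [hGood, Finset.mem_sdiff] at hi
        obtain ⟨hik, hibad⟩ := hi
        rw [Finset.mem_sdiff]
        constructor
        · apply Finset.mem_insert_of_mem
          rw [SimpleGraph.mem_neighborFinset, hAdj]
          refine ⟨?_, Or.inl ⟨i, Finset.mem_range.1 hik, rfl⟩⟩
          intro h
          have hval := congrArg Fin.val h
          rw [hfval] at hval
          have h0 : (v.val + 0) % n = (v.val + 3^i) % n := by
            rw [Nat.add_zero, Nat.mod_eq_of_lt v.isLt]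
            exact hval
          have hz := cancel_mod v.val 0 (3^i) hn1 (hpow_lt i (Finset.mem_range.1 hik)) h0
          have hp := hpow_pos i
          omega
        · intro hmem
          apply hibad
          rw [hBad, Finset.mem_filter]
          refine ⟨hik, ?_⟩
          rcases Finset.mem_insert.1 hmem with h | h
          · exact Or.inl h
          · rw [SimpleGraph.mem_neighborFinset] at h
            exact Or.inr h
      have hinjOn : Set.InjOn f ↑Good := by
        intro a ha b hb hab
        exact hfinj a (Finset.sdiff_subset (Finset.mem_coe.1 ha)) b
          (Finset.sdiff_subset (Finset.mem_coe.1 hb)) hab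
      calc w ≤ Good.card := hGoodcard
        _ = (Good.image f).card := (Finset.card_image_of_injOn hinjOn).symm
        _ ≤ _ := Finset.card_le_card himg
    exact key _ _
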